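/- Let ψ(x) = (1+x²)^{s/2}, s ∈ ℕ, σ > 0, and define for bounded measurable f : [0,∞) → ℂ and t ≥ 0: P_t f(x) := ∫_ℝ f((√x + σ√t y)²) (2π)^{-1/2} e^{−y²/2} dy. Then there exists a function C : [0,∞) → (0,∞), locally bounded, such that sup_{x≥0} ψ(x)^{-1} |P_t f(x)| ≤ C(t) sup_{x≥0} ψ(x)^{-1}|f(x)| for all f in the ψ-weighted sup-norm space. That is, P_t is a bounded operator on the weighted space with norm at most C(t). -/
import Mathlib

open MeasureTheory

noncomputable def gaussDensity (y : ℝ) : ℝ :=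
  (Real.sqrt (2 * Real.pi))⁻¹ * Real.exp (-(y ^ 2) / 2)

noncomputable def cirSemigroup (σ : ℝ) (t : ℝ) (f : ℝ → ℂ) (x : ℝ) : ℂ :=
  ∫ y : ℝ, gaussDensity y • f ((Real.sqrt x + σ * Real.sqrt t * y) ^ 2)

lemma gaussDensity_nonneg (y : ℝ) : 0 ≤ gaussDensity y := by
  unfold gaussDensity; positivity

lemma integrable_pow_gauss (n : ℕ) :
    Integrable (fun y : ℝ => y ^ n * Real.exp (-(y ^ 2) / 2)) := by
  have h := integrable_rpow_mul_exp_neg_mul_sq (b := 1/2) (by norm_num) (s := (n : ℝ))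
    (by exact_mod_cast neg_one_lt_zero.trans_le (Nat.cast_nonneg n))
  have heq : ∀ y : ℝ, y ^ (n : ℝ) * Real.exp (-(1/2) * y ^ 2)
      = y ^ n * Real.exp (-(y ^ 2) / 2) := by
    intro y; rw [Real.rpow_natCast]; ring_nf
  simp_rw [← heq]
  exact h

lemma integrable_aux (c : ℝ) (s : ℕ) :
    Integrable (fun y : ℝ => (1 + c * y ^ 2) ^ s * Real.exp (-(y ^ 2) / 2)) := by
  have hrw : ∀ y : ℝ, (1 + c * y ^ 2) ^ s * Real.exp (-(y ^ 2) / 2)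
      = ∑ k ∈ Finset.range (s + 1),
        ((s.choose k : ℝ) * c ^ (s - k)) * (y ^ (2 * (s - k)) * Real.exp (-(y ^ 2) / 2)) := by
    intro y
    rw [add_pow, Finset.sum_mul]
    refine Finset.sum_congr rfl fun k hk => ?_
    rw [mul_pow, ← pow_mul, one_pow]
    ring
  simp_rw [hrw]
  exact integrable_finset_sum _ fun k _ => (integrable_pow_gauss (2 * (s - k))).const_mul _

lemma integrable_gm (c : ℝ) (s : ℕ) :
    Integrable (fun y : ℝ => gaussDensity y * (1 + c * y ^ 2) ^ s) := by
  have h := (integrable_aux c s).const_mul (Real.sqrt (2 * Real.pi))⁻¹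
  have heq : ∀ y : ℝ, (Real.sqrt (2 * Real.pi))⁻¹ *
      ((1 + c * y ^ 2) ^ s * Real.exp (-(y ^ 2) / 2))
      = gaussDensity y * (1 + c * y ^ 2) ^ s := by
    intro y; unfold gaussDensity; ring
  simp_rw [← heq]
  exact h

lemma integrable_gauss : Integrable gaussDensity := by
  have := integrable_gm 0 0
  simpa using this

lemma gauss_integral : ∫ y : ℝ, gaussDensity y = 1 := by
  unfold gaussDensity
  rw [integral_const_mul]
  have : ∀ y : ℝ, Real.exp (-(y ^ 2) / 2) = Real.exp (-(1/2 : ℝ) * y ^ 2) := by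
    intro y; ring_nf
  simp_rw [this, integral_gaussian]
  rw [show Real.pi / (1/2) = 2 * Real.pi by ring]
  exact inv_mul_cancel₀ (by positivity)

lemma psi_pointwise_bound (s : ℕ) (a y x : ℝ) (hx : 0 ≤ x) :
    (1 + ((Real.sqrt x + a * y) ^ 2) ^ 2) ^ ((s : ℝ) / 2)
      ≤ 8 ^ ((s : ℝ) / 2) * (1 + x ^ 2) ^ ((s : ℝ) / 2) * (1 + a ^ 2 * y ^ 2) ^ s := by
  set p := Real.sqrt x with hp
  set q := a * y with hq
  have hp2 : p ^ 2 = x := Real.sq_sqrt hx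
  have hb : (0 : ℝ) ≤ a ^ 2 * y ^ 2 := by positivity
  have hq2 : q ^ 2 = a ^ 2 * y ^ 2 := by rw [hq]; ring
  have key : (p + q) ^ 4 ≤ 8 * p ^ 4 + 8 * q ^ 4 := by
    nlinarith [sq_nonneg (p - q), sq_nonneg (p + q), sq_nonneg (p ^ 2 - q ^ 2)]
  have hbase : 1 + ((p + q) ^ 2) ^ 2
      ≤ 8 * ((1 + x ^ 2) * (1 + a ^ 2 * y ^ 2) ^ 2) := by
    have h4 : ((p + q) ^ 2) ^ 2 = (p + q) ^ 4 := by ring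
    have hq4 : q ^ 4 = (a ^ 2 * y ^ 2) ^ 2 := by rw [← hq2]; ring
    have hp4 : p ^ 4 = x ^ 2 := by rw [← hp2]; ring
    nlinarith [key, hb, mul_nonneg (sq_nonneg x) hb,
      mul_nonneg (mul_nonneg (sq_nonneg x) hb) hb]
  have h1 : (0 : ℝ) ≤ 1 + ((p + q) ^ 2) ^ 2 := by positivity
  have h2 := Real.rpow_le_rpow h1 hbase (by positivity : (0:ℝ) ≤ (s : ℝ) / 2)
  refine h2.trans_eq ?_
  rw [Real.mul_rpow (by norm_num) (by positivity),
    Real.mul_rpow (by positivity) (by positivity), mul_assoc]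
  congr 1
  congr 1
  rw [← Real.rpow_natCast (1 + a ^ 2 * y ^ 2) 2, ← Real.rpow_mul (by positivity)]
  norm_num
  rw [show (2 : ℝ) * ((s:ℝ) / 2) = (s : ℝ) by ring]
  exact Real.rpow_natCast _ s

/-- with `ψ(x) = (1+x²)^{s/2}`, the operators
`P_t f(x) = ∫ f((√x + σ√t y)²) (2π)^{-1/2} e^{-y²/2} dy` are bounded on the
`ψ`-weighted sup-norm space, with locally bounded operator norm `C(t)`. -/
theorem cirSemigroup_weighted_bound
    (s : ℕ) (σ : ℝ) (hσ : 0 < σ)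
    (ψ : ℝ → ℝ) (hψ : ∀ x : ℝ, ψ x = (1 + x ^ 2) ^ ((s : ℝ) / 2)) :
    ∃ C : ℝ → ℝ,
      (∀ t ≥ (0 : ℝ), 0 < C t) ∧
      (∀ T ≥ (0 : ℝ), ∃ M : ℝ, ∀ t ∈ Set.Icc (0 : ℝ) T, C t ≤ M) ∧
      (∀ t ≥ (0 : ℝ), ∀ f : ℝ → ℂ, Measurable f →
        ∀ K ≥ (0 : ℝ), (∀ x ≥ (0 : ℝ), ‖f x‖ ≤ K * ψ x) →
        ∀ x ≥ (0 : ℝ), ‖cirSemigroup σ t f x‖ ≤ C t * K * ψ x) := by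
  set e : ℝ := (8 : ℝ) ^ ((s : ℝ) / 2) with he
  have he0 : 0 < e := Real.rpow_pos_of_pos (by norm_num) _
  refine ⟨fun t => e * ∫ y : ℝ, gaussDensity y * (1 + σ ^ 2 * t * y ^ 2) ^ s, ?_, ?_, ?_⟩
  · -- positivity
    intro t ht
    have hmono : (∫ y : ℝ, gaussDensity y)
        ≤ ∫ y : ℝ, gaussDensity y * (1 + σ ^ 2 * t * y ^ 2) ^ s := by
      refine integral_mono integrable_gauss (integrable_gm _ s) fun y => ?_
      have h1 : (1 : ℝ) ≤ (1 + σ ^ 2 * t * y ^ 2) ^ s :=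
        one_le_pow₀ (by nlinarith [mul_nonneg (mul_nonneg (sq_nonneg σ) ht) (sq_nonneg y)])
      exact le_mul_of_one_le_right (gaussDensity_nonneg y) h1
    rw [gauss_integral] at hmono
    have : (0:ℝ) < ∫ y : ℝ, gaussDensity y * (1 + σ ^ 2 * t * y ^ 2) ^ s :=
      lt_of_lt_of_le one_pos hmono
    simp only []
    positivity
  · -- locally bounded
    intro T hT
    refine ⟨e * ∫ y : ℝ, gaussDensity y * (1 + σ ^ 2 * T * y ^ 2) ^ s, fun t ht => ?_⟩
    refine mul_le_mul_of_nonneg_left ?_ he0.le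
    refine integral_mono (integrable_gm _ s) (integrable_gm _ s) fun y => ?_
    refine mul_le_mul_of_nonneg_left ?_ (gaussDensity_nonneg y)
    have hnn : (0:ℝ) ≤ 1 + σ ^ 2 * t * y ^ 2 := by
      nlinarith [mul_nonneg (mul_nonneg (sq_nonneg σ) ht.1) (sq_nonneg y)]
    have hle : 1 + σ ^ 2 * t * y ^ 2 ≤ 1 + σ ^ 2 * T * y ^ 2 := by
      nlinarith [mul_nonneg (sq_nonneg σ) (sq_nonneg y), ht.2]
    exact pow_le_pow_left₀ hnn hle s
  · -- main bound
    intro t ht f hf K hK hfK x hx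
    set a : ℝ := σ * Real.sqrt t with ha
    have ha2 : a ^ 2 = σ ^ 2 * t := by
      rw [ha, mul_pow, Real.sq_sqrt ht]
    have hbound : ∀ y : ℝ, ‖gaussDensity y • f ((Real.sqrt x + a * y) ^ 2)‖
        ≤ (e * K * ψ x) * (gaussDensity y * (1 + σ ^ 2 * t * y ^ 2) ^ s) := by
      intro y
      rw [norm_smul, Real.norm_eq_abs, abs_of_nonneg (gaussDensity_nonneg y)]
      have hu : (0:ℝ) ≤ (Real.sqrt x + a * y) ^ 2 := sq_nonneg _
      have h1 : ‖f ((Real.sqrt x + a * y) ^ 2)‖ ≤ K * ψ ((Real.sqrt x + a * y) ^ 2) :=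
        hfK _ hu
      have h2 : ψ ((Real.sqrt x + a * y) ^ 2) ≤ e * ψ x * (1 + σ ^ 2 * t * y ^ 2) ^ s := by
        rw [hψ, hψ, ← ha2]
        exact psi_pointwise_bound s a y x hx
      have h3 : ‖f ((Real.sqrt x + a * y) ^ 2)‖ ≤ K * (e * ψ x * (1 + σ ^ 2 * t * y ^ 2) ^ s) :=
        h1.trans (mul_le_mul_of_nonneg_left h2 hK)
      calc gaussDensity y * ‖f ((Real.sqrt x + a * y) ^ 2)‖
          ≤ gaussDensity y * (K * (e * ψ x * (1 + σ ^ 2 * t * y ^ 2) ^ s)) :=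
            mul_le_mul_of_nonneg_left h3 (gaussDensity_nonneg y)
        _ = (e * K * ψ x) * (gaussDensity y * (1 + σ ^ 2 * t * y ^ 2) ^ s) := by ring
    calc ‖cirSemigroup σ t f x‖
        ≤ ∫ y : ℝ, ‖gaussDensity y • f ((Real.sqrt x + a * y) ^ 2)‖ := by
          rw [cirSemigroup, ha]
          exact norm_integral_le_integral_norm _
      _ ≤ ∫ y : ℝ, (e * K * ψ x) * (gaussDensity y * (1 + σ ^ 2 * t * y ^ 2) ^ s) := by
          refine integral_mono_of_nonneg (Filter.Eventually.of_forall fun y => norm_nonneg _)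
            (((integrable_gm _ s).const_mul _)) (Filter.Eventually.of_forall hbound)
      _ = (e * K * ψ x) * ∫ y : ℝ, gaussDensity y * (1 + σ ^ 2 * t * y ^ 2) ^ s :=
          integral_const_mul _ _
      _ = (e * ∫ y : ℝ, gaussDensity y * (1 + σ ^ 2 * t * y ^ 2) ^ s) * K * ψ x := by ring
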